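/- Let Γ be a connected bipartite k-regular graph on n vertices with adjacency spectrum {[±k]¹, [±θ]^a, [0]^b} (a, b ≥ 1), and write A = [[0,N],[Nᵀ,0]]. Then NNᵀN = θ²N + (2k/n)(k² − θ²)·J, where J is the all-ones matrix of size n/2. -/

import Mathlib

open Matrix

section aux
variable {ι : Type*} [Fintype ι] [DecidableEq ι]

omit [DecidableEq ι] in
lemma trace_mul_vecMulVec' (X : Matrix ι ι ℝ) (u z : ι → ℝ) :
    Matrix.trace (X * Matrix.vecMulVec u z) = z ⬝ᵥ (X *ᵥ u) := by
  simp only [Matrix.trace, Matrix.diag, Matrix.mul_apply, Matrix.vecMulVec_apply,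
    dotProduct, Matrix.mulVec, Finset.mul_sum]
  exact Finset.sum_congr rfl fun i _ => Finset.sum_congr rfl fun j _ => by ring

omit [DecidableEq ι] in
lemma vecMulVec_transpose'' (u z : ι → ℝ) :
    (Matrix.vecMulVec u z)ᵀ = Matrix.vecMulVec z u := by
  ext i j; simp [Matrix.vecMulVec_apply, mul_comm]

omit [DecidableEq ι] in
lemma vecMulVec_mulVec' (u z x : ι → ℝ) :
    Matrix.vecMulVec u z *ᵥ x = (z ⬝ᵥ x) • u := by
  funext i
  simp only [Matrix.mulVec, dotProduct, Matrix.vecMulVec_apply, Pi.smul_apply, smul_eq_mul,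
    Finset.sum_mul]
  exact Finset.sum_congr rfl fun j _ => by ring

lemma trace_pow_eq_sum_eigenvalues' {A : Matrix ι ι ℝ} (hA : A.IsHermitian) (j : ℕ) :
    Matrix.trace (A ^ j) = ∑ i, hA.eigenvalues i ^ j := by
  set U : Matrix ι ι ℝ := (hA.eigenvectorUnitary : Matrix ι ι ℝ) with hU
  set D : Matrix ι ι ℝ := Matrix.diagonal (RCLike.ofReal ∘ hA.eigenvalues) with hD
  have h1 : star U * U = 1 := Matrix.mem_unitaryGroup_iff'.mp hA.eigenvectorUnitary.2
  have key : ∀ j : ℕ, A ^ j = U * D ^ j * star U := by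
    intro j
    induction j with
    | zero =>
      simp only [pow_zero, mul_one, one_mul]
      exact (Matrix.mem_unitaryGroup_iff.mp hA.eigenvectorUnitary.2).symm
    | succ j ih =>
      rw [pow_succ, ih, hA.spectral_theorem, Unitary.conjStarAlgAut_apply, ← hU, ← hD, pow_succ]
      simp only [mul_assoc]
      rw [← mul_assoc (star U) U, h1, one_mul]
  rw [key j, Matrix.trace_mul_comm, ← mul_assoc, h1, one_mul,
    Matrix.diagonal_pow, Matrix.trace_diagonal]
  simp

omit [DecidableEq ι] in
lemma sym_trace_sq_zero {R : Matrix ι ι ℝ} (hRt : Rᵀ = R)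
    (h : Matrix.trace (R * R) = 0) : R = 0 := by
  have htr : Matrix.trace (R * Rᵀ) = 0 := by rw [hRt]; exact h
  have hsq : ∑ x, ∑ y, (R x y) ^ 2 = 0 := by
    rw [← htr]
    simp [Matrix.trace, Matrix.diag, Matrix.mul_apply, Matrix.transpose_apply, sq]
  ext x y
  have h1 := (Finset.sum_eq_zero_iff_of_nonneg
    (fun x _ => Finset.sum_nonneg fun y _ => sq_nonneg _)).mp hsq x (Finset.mem_univ x)
  have h2 := (Finset.sum_eq_zero_iff_of_nonneg (fun y _ => sq_nonneg _)).mp h1 y (Finset.mem_univ y)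
  simpa using sq_eq_zero_iff.mp h2

end aux

/-- all-ones vector on a sum type -/
def vOne (m : ℕ) : Fin m ⊕ Fin m → ℝ := Sum.elim (fun _ => 1) (fun _ => 1)

/-- signed vector on a sum type -/
def wSgn (m : ℕ) : Fin m ⊕ Fin m → ℝ := Sum.elim (fun _ => 1) (fun _ => -1)


/-- for a connected bipartite `k`-regular graph on `n = 2m` vertices
with adjacency matrix `A = [[0,N],[Nᵀ,0]]` and spectrum `{[±k]¹, [±θ]^a, [0]^b}`
(`a, b ≥ 1`), one has `NNᵀN = θ²N + (2k/n)(k² − θ²)·J`. -/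
theorem five_eigenvalue_block_identity
    (m : ℕ) (hm : 0 < m) (N : Matrix (Fin m) (Fin m) ℝ)
    (k a b : ℕ) (θ : ℝ) (hθ : 0 < θ) (ha : 1 ≤ a) (hb : 1 ≤ b)
    (h01 : ∀ i j, N i j = 0 ∨ N i j = 1)
    (hrow : ∀ i, ∑ j, N i j = (k : ℝ))
    (hcol : ∀ j, ∑ i, N i j = (k : ℝ))
    (hA : (Matrix.fromBlocks (0 : Matrix (Fin m) (Fin m) ℝ) N Nᵀ 0).IsHermitian)
    (hspec : Finset.univ.val.map hA.eigenvalues =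
      (k : ℝ) ::ₘ (-(k : ℝ)) ::ₘ
        (Multiset.replicate a θ + Multiset.replicate a (-θ) +
          Multiset.replicate b (0 : ℝ))) :
    N * Nᵀ * N = θ ^ 2 • N +
      (2 * (k : ℝ) / (2 * m) * ((k : ℝ) ^ 2 - θ ^ 2)) • Matrix.of (fun _ _ => (1 : ℝ)) := by
  classical
  set A : Matrix (Fin m ⊕ Fin m) (Fin m ⊕ Fin m) ℝ := Matrix.fromBlocks 0 N Nᵀ 0 with hAdef
  set K : ℝ := (k : ℝ) with hK
  set nR : ℝ := 2 * (m : ℝ) with hnRdef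
  have hnR : nR ≠ 0 := by
    rw [hnRdef]; positivity
  set p : ℝ := K ^ 3 - θ ^ 2 * K with hp
  set c : ℝ := p / nR with hc
  -- spectral sums
  have hsum : ∀ j : ℕ, Matrix.trace (A ^ j) =
      K ^ j + (-K) ^ j + (a * θ ^ j + a * (-θ) ^ j + b * (0:ℝ) ^ j) := by
    intro j
    rw [trace_pow_eq_sum_eigenvalues' hA]
    have h1 : ∑ i, hA.eigenvalues i ^ j =
        ((Finset.univ.val.map hA.eigenvalues).map (· ^ j)).sum := by
      rw [Multiset.map_map]; rfl
    rw [h1, hspec]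
    simp [Multiset.sum_replicate]
    ring
  have hA3 : A ^ 3 = A * A * A := by rw [pow_succ, pow_two]
  have hA4 : A ^ 4 = (A * A * A) * A := by rw [← hA3, ← pow_succ]
  have hA6 : A ^ 6 = (A * A * A) * (A * A * A) := by rw [← hA3, ← pow_add]
  have t2 : Matrix.trace (A * A) = 2 * K ^ 2 + 2 * a * θ ^ 2 := by
    rw [← pow_two, hsum 2]; ring
  have t4 : Matrix.trace ((A * A * A) * A) = 2 * K ^ 4 + 2 * a * θ ^ 4 := by
    rw [← hA4, hsum 4]; ring
  have t6 : Matrix.trace ((A * A * A) * (A * A * A)) = 2 * K ^ 6 + 2 * a * θ ^ 6 := by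
    rw [← hA6, hsum 6]; ring
  -- the matrix M
  set M : Matrix (Fin m ⊕ Fin m) (Fin m ⊕ Fin m) ℝ := A * A * A - θ ^ 2 • A with hM
  have tMM : Matrix.trace (M * M) = 2 * p ^ 2 := by
    have e : M * M = (A*A*A)*(A*A*A) - θ^2 • ((A*A*A)*A) - θ^2 • (A*(A*A*A))
        + (θ^2*θ^2) • (A*A) := by
      rw [hM]
      simp only [sub_mul, mul_sub, Matrix.smul_mul, Matrix.mul_smul, smul_smul]
      abel
    have e2 : Matrix.trace (A*(A*A*A)) = Matrix.trace ((A*A*A)*A) :=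
      Matrix.trace_mul_comm A (A*A*A)
    rw [e]
    simp only [Matrix.trace_sub, Matrix.trace_add, Matrix.trace_smul, smul_eq_mul]
    rw [e2, t2, t4, t6, hp]
    ring
  -- eigen equations
  have hv1 : A *ᵥ vOne m = K • vOne m := by
    funext x
    cases x with
    | inl i =>
      simp [hAdef, Matrix.mulVec, dotProduct, Fintype.sum_sum_type, vOne, hrow i]
    | inr j =>
      simp [hAdef, Matrix.mulVec, dotProduct, Fintype.sum_sum_type, vOne, hcol j]
  have hw1 : A *ᵥ wSgn m = (-K) • wSgn m := by
    funext x
    cases x with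
    | inl i =>
      simp [hAdef, Matrix.mulVec, dotProduct, Fintype.sum_sum_type, wSgn, mul_neg,
        Finset.sum_neg_distrib, hrow i]
    | inr j =>
      simp [hAdef, Matrix.mulVec, dotProduct, Fintype.sum_sum_type, wSgn, mul_neg,
        hcol j]
  have hv2 : (A * A) *ᵥ vOne m = (K * K) • vOne m := by
    rw [← Matrix.mulVec_mulVec, hv1, Matrix.mulVec_smul, hv1, smul_smul]
  have hv3 : (A * A * A) *ᵥ vOne m = (K * (K * K)) • vOne m := by
    rw [← Matrix.mulVec_mulVec, hv1, Matrix.mulVec_smul, hv2, smul_smul]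
  have hw2 : (A * A) *ᵥ wSgn m = ((-K) * (-K)) • wSgn m := by
    rw [← Matrix.mulVec_mulVec, hw1, Matrix.mulVec_smul, hw1, smul_smul]
  have hw3 : (A * A * A) *ᵥ wSgn m = ((-K) * ((-K) * (-K))) • wSgn m := by
    rw [← Matrix.mulVec_mulVec, hw1, Matrix.mulVec_smul, hw2, smul_smul]
  have hMv : M *ᵥ vOne m = p • vOne m := by
    rw [hM, Matrix.sub_mulVec, Matrix.smul_mulVec, hv3, hv1, smul_smul, ← sub_smul]
    congr 1
    rw [hp]; ring
  have hMw : M *ᵥ wSgn m = (-p) • wSgn m := by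
    rw [hM, Matrix.sub_mulVec, Matrix.smul_mulVec, hw3, hw1, smul_smul, ← sub_smul]
    congr 1
    rw [hp]; ring
  -- dot products
  have hvv : vOne m ⬝ᵥ vOne m = nR := by
    simp [dotProduct, vOne, Fintype.sum_sum_type, hnRdef]; ring
  have hww : wSgn m ⬝ᵥ wSgn m = nR := by
    simp [dotProduct, wSgn, Fintype.sum_sum_type, hnRdef]; ring
  have hwv : wSgn m ⬝ᵥ vOne m = 0 := by
    simp [dotProduct, wSgn, vOne, Fintype.sum_sum_type]
  have hvw : vOne m ⬝ᵥ wSgn m = 0 := by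
    simp [dotProduct, wSgn, vOne, Fintype.sum_sum_type]
  -- the matrix P
  set P : Matrix (Fin m ⊕ Fin m) (Fin m ⊕ Fin m) ℝ :=
    c • (Matrix.vecMulVec (vOne m) (vOne m) - Matrix.vecMulVec (wSgn m) (wSgn m)) with hP
  have hPv : P *ᵥ vOne m = p • vOne m := by
    rw [hP, Matrix.smul_mulVec, Matrix.sub_mulVec, vecMulVec_mulVec', vecMulVec_mulVec',
      hvv, hwv, zero_smul, sub_zero, smul_smul, hc, div_mul_cancel₀ _ hnR]
  have hPw : P *ᵥ wSgn m = (-p) • wSgn m := by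
    rw [hP, Matrix.smul_mulVec, Matrix.sub_mulVec, vecMulVec_mulVec', vecMulVec_mulVec',
      hvw, hww, zero_smul, zero_sub, smul_neg, smul_smul, hc, div_mul_cancel₀ _ hnR, ← neg_smul]
  -- traces with P
  have traceXP : ∀ X : Matrix (Fin m ⊕ Fin m) (Fin m ⊕ Fin m) ℝ,
      X *ᵥ vOne m = p • vOne m → X *ᵥ wSgn m = (-p) • wSgn m →
      Matrix.trace (X * P) = 2 * p ^ 2 := by
    intro X hXv hXw
    rw [hP, Matrix.mul_smul, Matrix.trace_smul, mul_sub, Matrix.trace_sub,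
      trace_mul_vecMulVec', trace_mul_vecMulVec', hXv, hXw,
      dotProduct_smul, dotProduct_smul, hvv, hww, smul_eq_mul, smul_eq_mul, smul_eq_mul, hc]
    field_simp
    ring
  have tMP : Matrix.trace (M * P) = 2 * p ^ 2 := traceXP M hMv hMw
  have tPP : Matrix.trace (P * P) = 2 * p ^ 2 := traceXP P hPv hPw
  have tPM : Matrix.trace (P * M) = 2 * p ^ 2 := by
    rw [Matrix.trace_mul_comm]; exact tMP
  -- R := M - P is symmetric with zero squared trace
  have hAsym : Aᵀ = A := by
    have h := hA.eq
    simpa using h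
  have hMt : Mᵀ = M := by
    rw [hM]
    simp [Matrix.transpose_sub, Matrix.transpose_smul, Matrix.transpose_mul, hAsym, mul_assoc]
  have hPt : Pᵀ = P := by
    rw [hP]
    simp [Matrix.transpose_sub, Matrix.transpose_smul, vecMulVec_transpose'']
  have hRt : (M - P)ᵀ = M - P := by rw [Matrix.transpose_sub, hMt, hPt]
  have tRR : Matrix.trace ((M - P) * (M - P)) = 0 := by
    have e : (M - P) * (M - P) = M * M - M * P - (P * M - P * P) := by
      simp only [sub_mul, mul_sub]
      abel
    rw [e, Matrix.trace_sub, Matrix.trace_sub, Matrix.trace_sub, tMM, tMP, tPM, tPP]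
    ring
  have hMP : M = P := sub_eq_zero.mp (sym_trace_sq_zero hRt tRR)
  -- extract the (1,2) block
  have hA3b : A * A * A =
      Matrix.fromBlocks 0 (N * Nᵀ * N) (Nᵀ * N * Nᵀ) 0 := by
    rw [hAdef]
    simp [Matrix.fromBlocks_multiply, Matrix.mul_assoc]
  ext i j
  have h := congrFun (congrFun hMP (Sum.inl i)) (Sum.inr j)
  rw [hM, hA3b] at h
  simp only [Matrix.sub_apply, Matrix.smul_apply, Matrix.fromBlocks_apply₁₂, hP,
    Matrix.vecMulVec_apply, vOne, wSgn, Sum.elim_inl, Sum.elim_inr, smul_eq_mul,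
    Matrix.add_apply, Matrix.of_apply, hAdef] at h ⊢
  have hcoef : 2 * K / (2 * (m:ℝ)) * (K ^ 2 - θ ^ 2) = c * (1 * 1 - 1 * -1) := by
    rw [hc, hp, hnRdef]; field_simp; ring
  rw [hcoef]
  linarith [h]
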